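/- Let p be a prime and G an elementary abelian p-subgroup of the symmetric group S_N of order p^r. Then G contains a permutation that is a product of at least r disjoint p-cycles. -/

import Mathlib

private def zmodModuleOf {p : ℕ} {M : Type*} [AddCommGroup M] (h : ∀ x : M, p • x = 0) :
    Module (ZMod p) M := AddCommGroup.zmodModule h

private lemma mul_le_pow_of_one_le {p k : ℕ} (hp : 2 ≤ p) (hk : 1 ≤ k) : p * k ≤ p ^ k := by
  calc p * k ≤ p * p ^ (k - 1) := by
        have h1 : k - 1 < p ^ (k - 1) := Nat.lt_pow_self (by omega)
        exact Nat.mul_le_mul_left p (by omega)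
    _ = p ^ k := by rw [← pow_succ']; congr 1; omega

/-- An elementary abelian `p`-subgroup of order `p^r` of a symmetric group contains an
element which is a product of at least `r` disjoint `p`-cycles (i.e. whose cycle type
contains `p` with multiplicity at least `r`). -/
theorem stmt_5 (p : ℕ) (hp : p.Prime) (N r : ℕ) (G : Subgroup (Equiv.Perm (Fin N)))
    (hab : ∀ g h : G, g * h = h * g)
    (hexp : ∀ g : G, g ^ p = 1)
    (hcard : Nat.card G = p ^ r) :
    ∃ g ∈ G, r ≤ Multiset.count p (Equiv.Perm.cycleType g) := by
  rcases Nat.eq_zero_or_pos r with hr | hr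
  · exact ⟨1, G.one_mem, by simp [hr]⟩
  classical
  haveI : Fact p.Prime := ⟨hp⟩
  letI : CommGroup ↥G := { (inferInstance : Group ↥G) with mul_comm := hab }
  haveI : Finite ↥G := Nat.finite_of_card_ne_zero (by rw [hcard]; exact (pow_pos hp.pos r).ne')
  have hsmul : ∀ x : Additive ↥G, p • x = 0 := by
    intro x
    have h1 : Additive.ofMul ((Additive.toMul x) ^ p) = p • x := ofMul_pow p (Additive.toMul x)
    rw [hexp, ofMul_one] at h1
    exact h1.symm
  letI : Module (ZMod p) (Additive ↥G) := zmodModuleOf hsmul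
  haveI : Module.Finite (ZMod p) (Additive ↥G) := Module.Finite.of_finite
  -- the rank of `G` as a vector space over `ZMod p` is `r`
  have hfr : Module.finrank (ZMod p) (Additive ↥G) = r := by
    haveI : Fintype (Additive ↥G) := Fintype.ofFinite _
    have h1 : Fintype.card (Additive ↥G) = p ^ Module.finrank (ZMod p) (Additive ↥G) := by
      rw [Module.card_eq_pow_finrank (K := ZMod p), ZMod.card]
    have h2 : Nat.card (Additive ↥G) = p ^ r := hcard
    rw [Nat.card_eq_fintype_card, h1] at h2
    exact Nat.pow_right_injective hp.two_le h2
  -- stabilizers of points, as submodules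
  let Stab : Fin N → Submodule (ZMod p) (Additive ↥G) := fun y =>
    AddSubgroup.toZModSubmodule p (Subgroup.toAddSubgroup (MulAction.stabilizer ↥G y))
  have hmemStab : ∀ (x : Additive ↥G) (y : Fin N),
      x ∈ Stab y ↔ ((Additive.toMul x : ↥G) : Equiv.Perm (Fin N)) y = y := by
    intro x y
    constructor
    · intro h; exact h
    · intro h; exact h
  have hfaith : (⨅ y, Stab y) = ⊥ := by
    ext x
    simp only [Submodule.mem_iInf, Submodule.mem_bot]
    constructor
    · intro hx
      have h1 : (Additive.toMul x : ↥G) = 1 := by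
        apply Subtype.ext
        exact Equiv.ext fun y => (hmemStab x y).1 (hx y)
      simpa using congrArg Additive.ofMul h1
    · rintro rfl y
      exact (hmemStab 0 y).mpr rfl
  -- the coordinate functionals span the dual space
  have hsup : (⨆ y, (Stab y).dualAnnihilator) = ⊤ := by
    rw [← Subspace.dualAnnihilator_iInf_eq, hfaith, Submodule.dualAnnihilator_bot]
  have hspan : Submodule.span (ZMod p)
      (⋃ y, ((Stab y).dualAnnihilator : Set (Module.Dual (ZMod p) (Additive ↥G)))) = ⊤ := by
    rw [Submodule.span_iUnion]
    simp_rw [Submodule.span_eq]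
    exact hsup
  obtain ⟨b, hbsub, hbspan, hbli⟩ := exists_linearIndependent (ZMod p)
      (⋃ y, ((Stab y).dualAnnihilator : Set (Module.Dual (ZMod p) (Additive ↥G))))
  rw [hspan] at hbspan
  let B : Module.Basis b (ZMod p) (Module.Dual (ZMod p) (Additive ↥G)) :=
    Module.Basis.mk hbli (by rw [Subtype.range_coe]; exact hbspan.ge)
  haveI : Fintype b := FiniteDimensional.fintypeBasisIndex B
  have hbcard : Fintype.card b = r := by
    rw [← Module.finrank_eq_card_basis B, Subspace.dual_finrank_eq, hfr]
  -- for each basis functional choose a point whose stabilizer it annihilates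
  have hch : ∀ i : b, ∃ y : Fin N,
      (i : Module.Dual (ZMod p) (Additive ↥G)) ∈ (Stab y).dualAnnihilator :=
    fun i => Set.mem_iUnion.mp (hbsub i.2)
  choose yy hyy using hch
  -- the element `g` on which all basis functionals take value 1
  let gV : Additive ↥G :=
    (Module.evalEquiv (ZMod p) (Additive ↥G)).symm (∑ i : b, B.dualBasis i)
  have hgB : ∀ i : b, (i : Module.Dual (ZMod p) (Additive ↥G)) gV = 1 := by
    intro i
    have h1 : (B i) gV = 1 := by
      show (B i) ((Module.evalEquiv (ZMod p) (Additive ↥G)).symm (∑ j : b, B.dualBasis j)) = 1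
      rw [Module.apply_evalEquiv_symm_apply]
      simp [LinearMap.coe_sum, Module.Basis.dualBasis_apply_self]
    simpa [B, Module.Basis.coe_mk] using h1
  have hg_not : ∀ i : b, gV ∉ Stab (yy i) := by
    intro i hmem
    have h0 : (i : Module.Dual (ZMod p) (Additive ↥G)) gV = 0 :=
      (Submodule.mem_dualAnnihilator _).mp (hyy i) gV hmem
    rw [hgB i] at h0
    exact one_ne_zero h0
  set gG : ↥G := Additive.toMul gV with hgG
  have hmoves : ∀ y : Fin N, gV ∉ Stab y → (gG : Equiv.Perm (Fin N)) y ≠ y := by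
    intro y h hy
    exact h ((hmemStab gV y).mpr hy)
  -- sets of points with a given stabilizer
  let st : b → Submodule (ZMod p) (Additive ↥G) := fun i => Stab (yy i)
  let I : Finset (Submodule (ZMod p) (Additive ↥G)) := Finset.univ.image st
  let T : Submodule (ZMod p) (Additive ↥G) → Finset (Fin N) :=
    fun W => Finset.univ.filter fun y => Stab y = W
  have hgW : ∀ W ∈ I, gV ∉ W := by
    intro W hW
    obtain ⟨i, -, rfl⟩ := Finset.mem_image.mp hW
    exact hg_not i
  have hTsub : ∀ W ∈ I, T W ⊆ (gG : Equiv.Perm (Fin N)).support := by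
    intro W hW y hy
    rw [Finset.mem_filter] at hy
    rw [Equiv.Perm.mem_support]
    refine hmoves y ?_
    rw [hy.2]
    exact hgW W hW
  -- the fibers of `st` are not too big
  have hfib : ∀ W : Submodule (ZMod p) (Additive ↥G),
      (Finset.univ.filter fun i : b => st i = W).card ≤ r - Module.finrank (ZMod p) W := by
    intro W
    have hmem2 : ∀ i : (Finset.univ.filter fun i : b => st i = W),
        ((i : b) : Module.Dual (ZMod p) (Additive ↥G)) ∈ W.dualAnnihilator := by
      intro i
      have h2 := (Finset.mem_filter.mp i.2).2
      rw [Submodule.mem_dualAnnihilator _]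
      intro w hw
      rw [← h2] at hw
      exact (Submodule.mem_dualAnnihilator _).mp (hyy _) w hw
    have hli2 : LinearIndependent (ZMod p)
        (fun i : (Finset.univ.filter fun i : b => st i = W) =>
          (⟨((i : b) : Module.Dual (ZMod p) (Additive ↥G)), hmem2 i⟩ : W.dualAnnihilator)) := by
      apply LinearIndependent.of_comp W.dualAnnihilator.subtype
      exact hbli.comp Subtype.val Subtype.val_injective
    have h3 := hli2.fintype_card_le_finrank
    rw [Fintype.card_coe] at h3
    have e1 : Module.finrank (ZMod p) ((Additive ↥G) ⧸ W)
        = Module.finrank (ZMod p) W.dualAnnihilator :=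
      LinearEquiv.finrank_eq (Subspace.quotEquivAnnihilator W)
    have e2 := Submodule.finrank_quotient_add_finrank W
    rw [hfr] at e2
    omega
  -- the sets `T W` are big
  have hTcard : ∀ W ∈ I, p ^ (r - Module.finrank (ZMod p) W) ≤ (T W).card := by
    intro W hW
    obtain ⟨i, -, hi⟩ := Finset.mem_image.mp hW
    subst hi
    have horb : (MulAction.orbit ↥G (yy i) : Set (Fin N)) ⊆ ↑(T (st i)) := by
      rintro z ⟨a, rfl⟩
      have hstabeq : MulAction.stabilizer ↥G (a • yy i) = MulAction.stabilizer ↥G (yy i) := by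
        ext x
        simp only [MulAction.mem_stabilizer_iff]
        have key : x • (a • yy i) = a • (x • yy i) := by
          rw [smul_smul, smul_smul, mul_comm]
        rw [key]
        exact smul_left_cancel_iff a
      simp only [T, Finset.coe_filter, Set.mem_setOf_eq, Finset.mem_univ, true_and]
      show Stab (a • yy i) = st i
      show AddSubgroup.toZModSubmodule p
          (Subgroup.toAddSubgroup (MulAction.stabilizer ↥G (a • yy i))) = st i
      rw [hstabeq]
    have e1 : Nat.card (MulAction.orbit ↥G (yy i)) = (MulAction.stabilizer ↥G (yy i)).index :=
      Nat.card_congr (MulAction.orbitEquivQuotientStabilizer ↥G (yy i))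
    have e2 : (MulAction.stabilizer ↥G (yy i)).index
        * Nat.card (MulAction.stabilizer ↥G (yy i)) = p ^ r := by
      rw [Subgroup.index_mul_card, hcard]
    have e3 : Nat.card (MulAction.stabilizer ↥G (yy i))
        = p ^ Module.finrank (ZMod p) (st i) := by
      have h4 : Nat.card (st i) = p ^ Module.finrank (ZMod p) (st i) := by
        haveI : Fintype (st i) := Fintype.ofFinite _
        rw [Nat.card_eq_fintype_card, Module.card_eq_pow_finrank (K := ZMod p) (V := (st i)), ZMod.card]
      rw [← h4]
      apply Nat.card_congr
      exact ⟨fun x => ⟨Additive.ofMul x.1, x.2⟩, fun x => ⟨Additive.toMul x.1, x.2⟩,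
        fun x => rfl, fun x => rfl⟩
    have hd : Module.finrank (ZMod p) (st i) ≤ r := by
      have := Submodule.finrank_le (st i)
      omega
    have e4 : (MulAction.stabilizer ↥G (yy i)).index
        = p ^ (r - Module.finrank (ZMod p) (st i)) := by
      rw [e3] at e2
      have h5 : p ^ (r - Module.finrank (ZMod p) (st i)) * p ^ Module.finrank (ZMod p) (st i)
          = p ^ r := by
        rw [← pow_add]; congr 1; omega
      exact Nat.eq_of_mul_eq_mul_right (pow_pos hp.pos _) (e2.trans h5.symm)
    calc p ^ (r - Module.finrank (ZMod p) (st i))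
        = Nat.card (MulAction.orbit ↥G (yy i)) := by rw [e1, e4]
      _ ≤ Nat.card (↑(T (st i)) : Set (Fin N)) := Nat.card_mono (Set.toFinite _) horb
      _ = (T (st i)).card := by rw [Nat.card_coe_set_eq, Set.ncard_coe_finset]
  -- putting everything together
  have hfinal : p * r ≤ (gG : Equiv.Perm (Fin N)).support.card := by
    have hsum1 : (Finset.univ : Finset b).card
        = ∑ W ∈ I, (Finset.univ.filter fun i : b => st i = W).card :=
      Finset.card_eq_sum_card_fiberwise fun i _ => Finset.mem_image_of_mem st (Finset.mem_univ i)
    have hbound : ∀ W ∈ I, p * (Finset.univ.filter fun i : b => st i = W).card ≤ (T W).card := by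
      intro W hW
      have hne : W ≠ ⊤ := fun h => hgW W hW (h ▸ Submodule.mem_top)
      have hlt : Module.finrank (ZMod p) W < r := by
        have := Submodule.finrank_lt hne
        omega
      calc p * (Finset.univ.filter fun i : b => st i = W).card
          ≤ p * (r - Module.finrank (ZMod p) W) := Nat.mul_le_mul_left p (hfib W)
        _ ≤ p ^ (r - Module.finrank (ZMod p) W) := mul_le_pow_of_one_le hp.two_le (by omega)
        _ ≤ (T W).card := hTcard W hW
    have hdisj : ∀ W1 ∈ I, ∀ W2 ∈ I, W1 ≠ W2 → Disjoint (T W1) (T W2) := by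
      intro W1 _ W2 _ hne
      rw [Finset.disjoint_left]
      intro y hy1 hy2
      rw [Finset.mem_filter] at hy1 hy2
      exact hne (hy1.2 ▸ hy2.2 ▸ rfl)
    calc p * r = ∑ W ∈ I, p * (Finset.univ.filter fun i : b => st i = W).card := by
          rw [← Finset.mul_sum, ← hsum1, Finset.card_univ, hbcard]
      _ ≤ ∑ W ∈ I, (T W).card := Finset.sum_le_sum hbound
      _ = (I.biUnion T).card := (Finset.card_biUnion hdisj).symm
      _ ≤ (gG : Equiv.Perm (Fin N)).support.card :=
          Finset.card_le_card (Finset.biUnion_subset.mpr hTsub)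
  -- conclude via the cycle type
  have hbne : Nonempty b := Fintype.card_pos_iff.mp (by rw [hbcard]; exact hr)
  obtain ⟨i0⟩ := hbne
  have hgP1 : (gG : Equiv.Perm (Fin N)) ≠ 1 := by
    intro h
    have h2 := hmoves (yy i0) (hg_not i0)
    rw [h] at h2
    exact h2 rfl
  have hgPp : (gG : Equiv.Perm (Fin N)) ^ p = 1 := by
    have h2 : ((gG ^ p : ↥G) : Equiv.Perm (Fin N)) = ((1 : ↥G) : Equiv.Perm (Fin N)) :=
      congrArg _ (hexp gG)
    simpa using h2
  have horder : orderOf (gG : Equiv.Perm (Fin N)) = p := orderOf_eq_prime hgPp hgP1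
  obtain ⟨n, hn⟩ := Equiv.Perm.cycleType_prime_order (σ := (gG : Equiv.Perm (Fin N)))
    (by rw [horder]; exact hp)
  rw [horder] at hn
  refine ⟨(gG : Equiv.Perm (Fin N)), gG.2, ?_⟩
  rw [hn, Multiset.count_replicate_self]
  have hsupc : (gG : Equiv.Perm (Fin N)).support.card = (n + 1) * p := by
    rw [← Equiv.Perm.sum_cycleType, hn, Multiset.sum_replicate, smul_eq_mul]
  rw [hsupc] at hfinal
  have hppos := hp.pos
  nlinarith
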